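/- Let m be a positive integer and x a real number. For every n ≥ 0, the Hankel determinant of the Eulerian-Dowling polynomials satisfies det( (𝓐_m(i+j, x))_{0 ≤ i,j ≤ n} ) = (m(x−1)+1)^{C(n+1,2)} · ∏_{k=0}^n (k!)^2, where C(n+1,2) = n(n+1)/2. -/

import Mathlib

/-- Whitney numbers of the second kind:
`W_m(n,k) = (1/(m^k k!)) ∑_{i=0}^k (−1)^{k−i} C(k,i) (mi+1)^n`. -/
noncomputable def whitney2 (m n k : ℕ) : ℝ :=
  (1 / ((m : ℝ) ^ k * k.factorial)) *
    ∑ i ∈ Finset.range (k + 1), (-1 : ℝ) ^ (k - i) * (k.choose i) * ((m : ℝ) * i + 1) ^ n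

/-- Eulerian–Dowling polynomials `𝓐_m(n,x) = ∑_{k=0}^n k!·W_m(n,k)·(x−1)^{n−k}`. -/
noncomputable def eulerianDowling (m n : ℕ) (x : ℝ) : ℝ :=
  ∑ k ∈ Finset.range (n + 1), (k.factorial : ℝ) * whitney2 m n k * (x - 1) ^ (n - k)

open Finset Polynomial

/-- The alternating sum appearing in the Whitney numbers. -/
noncomputable def Tsum (m n k : ℕ) : ℝ :=
  ∑ i ∈ Finset.range (k + 1), (-1 : ℝ) ^ (k - i) * (k.choose i) * ((m : ℝ) * i + 1) ^ n

lemma choose_aux {k i : ℕ} (h : i ≤ k) :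
    (k + 1 - i) * (k + 1).choose i = (k + 1) * k.choose i := by
  have h1 : (k + 1).choose i = (k + 1).choose (k + 1 - i) := (Nat.choose_symm (by omega)).symm
  have h2 : k.choose i = k.choose (k - i) := (Nat.choose_symm h).symm
  have h3 : k + 1 - i = (k - i) + 1 := by omega
  have h4 := Nat.add_one_mul_choose_eq k (k - i)
  rw [h1, h2, h3]
  rw [h4]
  ring

lemma Tsum_zero_col (m n : ℕ) : Tsum m n 0 = 1 := by
  simp [Tsum]

lemma Tsum_succ (m n k : ℕ) :
    Tsum m (n + 1) k = ((m : ℝ) * k + 1) * Tsum m n k + (m : ℝ) * k * Tsum m n (k - 1) := by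
  cases k with
  | zero => simp [Tsum]
  | succ k =>
    have expand : ∀ i ∈ Finset.range (k + 2),
        (-1 : ℝ) ^ (k + 1 - i) * ((k + 1).choose i) * ((m : ℝ) * i + 1) ^ (n + 1)
        = ((m : ℝ) * (k + 1) + 1) *
            ((-1 : ℝ) ^ (k + 1 - i) * ((k + 1).choose i) * ((m : ℝ) * i + 1) ^ n)
          - (m : ℝ) * ((-1 : ℝ) ^ (k + 1 - i) *
              (((k + 1 - i) * (k + 1).choose i : ℕ) : ℝ) * ((m : ℝ) * i + 1) ^ n) := by
      intro i hi
      have hi' : i ≤ k + 1 := by simpa [Nat.lt_succ_iff] using Finset.mem_range.mp hi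
      have hc : ((k + 1 - i : ℕ) : ℝ) = (k : ℝ) + 1 - (i : ℝ) := by
        push_cast [Nat.cast_sub hi']; ring
      rw [pow_succ]
      push_cast [hc]
      ring
    have step1 : Tsum m (n + 1) (k + 1)
        = ((m : ℝ) * (k + 1) + 1) * Tsum m n (k + 1)
          - (m : ℝ) * ∑ i ∈ Finset.range (k + 2),
              (-1 : ℝ) ^ (k + 1 - i) * (((k + 1 - i) * (k + 1).choose i : ℕ) : ℝ) *
                ((m : ℝ) * i + 1) ^ n := by
      rw [Tsum, Finset.sum_congr rfl expand, Finset.sum_sub_distrib]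
      rw [← Finset.mul_sum, ← Finset.mul_sum]
      rfl
    have step2 : ∑ i ∈ Finset.range (k + 2),
        (-1 : ℝ) ^ (k + 1 - i) * (((k + 1 - i) * (k + 1).choose i : ℕ) : ℝ) *
          ((m : ℝ) * i + 1) ^ n
        = -((k + 1 : ℝ) * Tsum m n k) := by
      rw [Finset.sum_range_succ]
      simp only [Nat.sub_self, zero_mul, Nat.cast_zero, mul_zero, zero_mul, mul_zero, add_zero]
      rw [Tsum, Finset.mul_sum, ← Finset.sum_neg_distrib]
      refine Finset.sum_congr rfl (fun i hi => ?_)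
      have hik : i ≤ k := by simpa [Nat.lt_succ_iff] using Finset.mem_range.mp hi
      rw [choose_aux hik]
      have hsign : (-1 : ℝ) ^ (k + 1 - i) = -(-1 : ℝ) ^ (k - i) := by
        have : k + 1 - i = (k - i) + 1 := by omega
        rw [this, pow_succ]; ring
      push_cast [hsign]
      ring
    rw [step1, step2]
    push_cast
    ring

lemma Tsum_zero_of_lt (m : ℕ) : ∀ n k, n < k → Tsum m n k = 0 := by
  intro n
  induction n with
  | zero =>
    intro k hk
    have hb : ((1 : ℝ) + (-1)) ^ k = ∑ i ∈ Finset.range (k + 1),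
        (1 : ℝ) ^ i * (-1 : ℝ) ^ (k - i) * (k.choose i) := add_pow 1 (-1) k
    have : Tsum m 0 k = ((1 : ℝ) + (-1)) ^ k := by
      rw [hb]
      refine Finset.sum_congr rfl (fun i _ => ?_)
      simp
    rw [this]
    simp [zero_pow (by omega : k ≠ 0)]
  | succ n ih =>
    intro k hk
    rw [Tsum_succ, ih k (by omega), ih (k - 1) (by omega)]
    ring

lemma Tsum_diag (m n : ℕ) : Tsum m n n = (m : ℝ) ^ n * n.factorial := by
  induction n with
  | zero => simp [Tsum]
  | succ n ih =>
    rw [Tsum_succ, Tsum_zero_of_lt m n (n + 1) (by omega)]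
    simp only [Nat.add_sub_cancel, ih]
    push_cast [Nat.factorial_succ]
    ring

/-- The triangle `c n k = k! W_m(n,k) (x-1)^{n-k}`, defined by its recursion. -/
noncomputable def cfun (m : ℕ) (x : ℝ) : ℕ → ℕ → ℝ
  | 0, k => if k = 0 then 1 else 0
  | n + 1, k => (k : ℝ) * cfun m x n (k - 1) + ((m : ℝ) * k + 1) * (x - 1) * cfun m x n k

/-- The dual triangle `G i k = (eᵀ Kⁱ)_k`. -/
noncomputable def Gfun (m : ℕ) (x : ℝ) : ℕ → ℕ → ℝ
  | 0, _ => 1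
  | i + 1, k => ((k : ℝ) + 1) * Gfun m x i (k + 1) + ((m : ℝ) * k + 1) * (x - 1) * Gfun m x i k

lemma cfun_zero_of_lt (m : ℕ) (x : ℝ) : ∀ n k, n < k → cfun m x n k = 0 := by
  intro n
  induction n with
  | zero => intro k hk; simp [cfun, hk.ne']
  | succ n ih =>
    intro k hk
    rw [cfun, ih (k - 1) (by omega), ih k (by omega)]
    ring

lemma cfun_diag (m : ℕ) (x : ℝ) (n : ℕ) : cfun m x n n = n.factorial := by
  induction n with
  | zero => simp [cfun]
  | succ n ih =>
    rw [cfun, cfun_zero_of_lt m x n (n + 1) (by omega)]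
    simp only [Nat.add_sub_cancel, ih]
    push_cast [Nat.factorial_succ]
    ring

lemma cfun_closed (m : ℕ) (hm : 0 < m) (x : ℝ) : ∀ n k, k ≤ n →
    cfun m x n k = (1 / (m : ℝ) ^ k) * Tsum m n k * (x - 1) ^ (n - k) := by
  intro n
  induction n with
  | zero =>
    intro k hk
    interval_cases k
    simp [cfun, Tsum]
  | succ n ih =>
    intro k hk
    match k with
    | 0 =>
      rw [cfun, ih 0 (by omega)]
      simp [Tsum_zero_col]
      ring
    | k + 1 =>
      have hkn : k ≤ n := by omega
      have hck1 : cfun m x n (k + 1)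
          = (1 / (m : ℝ) ^ (k + 1)) * Tsum m n (k + 1) * (x - 1) ^ (n - (k + 1)) := by
        rcases Nat.lt_or_ge k n with h | h
        · exact ih (k + 1) (by omega)
        · have hkn' : k = n := by omega
          subst hkn'
          rw [cfun_zero_of_lt m x k (k + 1) (by omega), Tsum_zero_of_lt m k (k + 1) (by omega)]
          ring
      rw [cfun]
      simp only [Nat.add_sub_cancel]
      rw [ih k hkn, hck1, Tsum_succ]
      simp only [Nat.add_sub_cancel]
      rcases Nat.lt_or_ge k n with h | h
      · have e1 : n - k = (n - (k + 1)) + 1 := by omega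
        rw [e1, pow_succ]
        have e2 : n + 1 - (k + 1) = (n - (k + 1)) + 1 := by omega
        rw [e2, pow_succ]
        have hm' : (m : ℝ) ≠ 0 := Nat.cast_ne_zero.mpr hm.ne'
        field_simp
        ring
      · have hkn' : k = n := by omega
        subst hkn'
        rw [Tsum_zero_of_lt m k (k + 1) (by omega)]
        simp only [Nat.sub_self]
        have hm' : (m : ℝ) ≠ 0 := Nat.cast_ne_zero.mpr hm.ne'
        field_simp
        ring

lemma transfer (m : ℕ) (x : ℝ) : ∀ i j, ∑ k ∈ Finset.range (i + j + 1), Gfun m x i k * cfun m x j k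
    = ∑ k ∈ Finset.range (i + j + 1), cfun m x (i + j) k := by
  intro i
  induction i with
  | zero => intro j; simp [Gfun]
  | succ i ih =>
    intro j
    have h1 : ∑ k ∈ Finset.range (i + 1 + j + 1), Gfun m x (i + 1) k * cfun m x j k
        = ∑ k ∈ Finset.range (i + (j + 1) + 1), Gfun m x i k * cfun m x (j + 1) k := by
      have hL : ∑ k ∈ Finset.range (i + j + 2), Gfun m x (i + 1) k * cfun m x j k
          = (∑ k ∈ Finset.range (i + j + 2), ((k : ℝ) + 1) * Gfun m x i (k + 1) * cfun m x j k)
            + ∑ k ∈ Finset.range (i + j + 2),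
                ((m : ℝ) * k + 1) * (x - 1) * Gfun m x i k * cfun m x j k := by
        rw [← Finset.sum_add_distrib]
        refine Finset.sum_congr rfl (fun k _ => ?_)
        rw [Gfun]; ring
      have hR : ∑ k ∈ Finset.range (i + j + 2), Gfun m x i k * cfun m x (j + 1) k
          = (∑ k ∈ Finset.range (i + j + 2), (k : ℝ) * Gfun m x i k * cfun m x j (k - 1))
            + ∑ k ∈ Finset.range (i + j + 2),
                ((m : ℝ) * k + 1) * (x - 1) * Gfun m x i k * cfun m x j k := by
        rw [← Finset.sum_add_distrib]
        refine Finset.sum_congr rfl (fun k _ => ?_)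
        rw [cfun]; ring
      have hshift : ∑ k ∈ Finset.range (i + j + 2), (k : ℝ) * Gfun m x i k * cfun m x j (k - 1)
          = ∑ k ∈ Finset.range (i + j + 2), ((k : ℝ) + 1) * Gfun m x i (k + 1) * cfun m x j k := by
        rw [Finset.sum_range_succ' (fun k => (k : ℝ) * Gfun m x i k * cfun m x j (k - 1))]
        rw [Finset.sum_range_succ (fun k => ((k : ℝ) + 1) * Gfun m x i (k + 1) * cfun m x j k)]
        rw [cfun_zero_of_lt m x j (i + j + 1) (by omega)]
        push_cast
        simp [Nat.add_sub_cancel]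
      have hij : i + 1 + j + 1 = i + j + 2 := by omega
      have hij2 : i + (j + 1) + 1 = i + j + 2 := by omega
      rw [hij, hij2, hL, hR, hshift]
    rw [h1, ih (j + 1)]
    have e : i + (j + 1) = i + 1 + j := by omega
    rw [e]

/-- Polynomials representing the rows of `Gfun`. -/
noncomputable def Ppoly (m : ℕ) (x : ℝ) : ℕ → Polynomial ℝ
  | 0 => 1
  | i + 1 => (X + C 1) * ((Ppoly m x i).comp (X + C 1))
      + (C ((m : ℝ) * (x - 1)) * X + C (x - 1)) * Ppoly m x i

lemma Ppoly_eval (m : ℕ) (x : ℝ) : ∀ i k : ℕ, (Ppoly m x i).eval (k : ℝ) = Gfun m x i k := by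
  intro i
  induction i with
  | zero => intro k; simp [Ppoly, Gfun]
  | succ i ih =>
    intro k
    have h1 := ih (k + 1)
    push_cast at h1
    rw [Ppoly, Gfun]
    simp only [eval_add, eval_mul, eval_comp, eval_X, eval_C, h1, ih k]
    ring

lemma Ppoly_natDegree_le (m : ℕ) (x : ℝ) : ∀ i, (Ppoly m x i).natDegree ≤ i := by
  intro i
  induction i with
  | zero => simp [Ppoly]
  | succ i ih =>
    rw [Ppoly]
    refine (natDegree_add_le _ _).trans (max_le ?_ ?_)
    · refine (natDegree_mul_le).trans ?_
      have h1 : (X + C (1 : ℝ)).natDegree = 1 := natDegree_X_add_C 1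
      have h2 : ((Ppoly m x i).comp (X + C 1)).natDegree ≤ i := by
        rw [natDegree_comp, h1, mul_one]; exact ih
      omega
    · refine (natDegree_mul_le).trans ?_
      have h1 : (C ((m : ℝ) * (x - 1)) * X + C (x - 1)).natDegree ≤ 1 := natDegree_linear_le
      omega

lemma coeff_comp_X_add_one {p : Polynomial ℝ} {i : ℕ} (h : p.natDegree ≤ i) :
    (p.comp (X + C 1)).coeff i = p.coeff i := by
  rw [comp_eq_sum_left, Polynomial.sum_def, finset_sum_coeff]
  rw [Finset.sum_eq_single i]
  · simp [coeff_C_mul, coeff_X_add_one_pow]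
  · intro e he hne
    have hei : e < i := lt_of_le_of_ne ((le_natDegree_of_mem_supp e he).trans h) hne
    simp [coeff_C_mul, coeff_X_add_one_pow, Nat.choose_eq_zero_of_lt hei]
  · intro hi
    simp [coeff_C_mul, coeff_X_add_one_pow, notMem_support_iff.mp hi]

lemma Ppoly_coeff (m : ℕ) (x : ℝ) : ∀ i, (Ppoly m x i).coeff i = ((m : ℝ) * (x - 1) + 1) ^ i := by
  intro i
  induction i with
  | zero => simp [Ppoly]
  | succ i ih =>
    have hdeg := Ppoly_natDegree_le m x i
    have hQdeg : ((Ppoly m x i).comp (X + C 1)).natDegree ≤ i := by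
      rw [natDegree_comp, natDegree_X_add_C, mul_one]; exact hdeg
    rw [Ppoly, coeff_add]
    have h1 : ((X + C (1 : ℝ)) * ((Ppoly m x i).comp (X + C 1))).coeff (i + 1)
        = (Ppoly m x i).coeff i := by
      rw [add_mul, coeff_add, coeff_X_mul, coeff_C_mul, one_mul]
      rw [coeff_eq_zero_of_natDegree_lt (hQdeg.trans_lt (Nat.lt_succ_self i))]
      rw [coeff_comp_X_add_one hdeg]
      ring
    have h2 : ((C ((m : ℝ) * (x - 1)) * X + C (x - 1)) * Ppoly m x i).coeff (i + 1)
        = (m : ℝ) * (x - 1) * (Ppoly m x i).coeff i := by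
      rw [add_mul, coeff_add, mul_assoc, coeff_C_mul, coeff_X_mul, coeff_C_mul]
      rw [coeff_eq_zero_of_natDegree_lt (hdeg.trans_lt (Nat.lt_succ_self i))]
      ring
    rw [h1, h2, ih, pow_succ]
    ring

/-- The Hankel determinant of the Eulerian–Dowling polynomials is
`(m(x−1)+1)^{C(n+1,2)} ∏_{k=0}^n (k!)²`. -/
theorem eulerianDowling_hankel (m : ℕ) (hm : 0 < m) (x : ℝ) (n : ℕ) :
    Matrix.det (Matrix.of fun i j : Fin (n + 1) => eulerianDowling m ((i : ℕ) + (j : ℕ)) x) =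
      ((m : ℝ) * (x - 1) + 1) ^ ((n + 1).choose 2) *
        ∏ k ∈ Finset.range (n + 1), (k.factorial : ℝ) ^ 2 := by
  classical
  have hm' : (m : ℝ) ≠ 0 := Nat.cast_ne_zero.mpr hm.ne'
  set MB : Matrix (Fin (n + 1)) (Fin (n + 1)) ℝ :=
    Matrix.of (fun i r : Fin (n + 1) => (Ppoly m x (i : ℕ)).coeff (r : ℕ)) with hMBdef
  set MV : Matrix (Fin (n + 1)) (Fin (n + 1)) ℝ :=
    Matrix.of (fun r k : Fin (n + 1) => ((k : ℕ) : ℝ) ^ (r : ℕ)) with hMVdef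
  set MC : Matrix (Fin (n + 1)) (Fin (n + 1)) ℝ :=
    Matrix.of (fun k j : Fin (n + 1) => cfun m x (j : ℕ) (k : ℕ)) with hMCdef
  have hED : ∀ N : ℕ, eulerianDowling m N x = ∑ k ∈ Finset.range (N + 1), cfun m x N k := by
    intro N
    rw [eulerianDowling]
    refine Finset.sum_congr rfl (fun k hk => ?_)
    have hkN : k ≤ N := Nat.lt_succ_iff.mp (Finset.mem_range.mp hk)
    rw [cfun_closed m hm x N k hkN, whitney2]
    have hTk : Tsum m N k = ∑ i ∈ Finset.range (k + 1),
        (-1 : ℝ) ^ (k - i) * (k.choose i) * ((m : ℝ) * i + 1) ^ N := rfl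
    rw [← hTk]
    have hfk : (k.factorial : ℝ) ≠ 0 := Nat.cast_ne_zero.mpr k.factorial_ne_zero
    field_simp
  have hdrop : ∀ i j N : ℕ, j < N →
      ∑ k ∈ Finset.range N, Gfun m x i k * cfun m x j k
        = ∑ k ∈ Finset.range (j + 1), Gfun m x i k * cfun m x j k := by
    intro i j N hN
    symm
    apply Finset.sum_subset
    · intro k hk
      simp only [Finset.mem_range] at *
      omega
    · intro k _ hk2
      simp only [Finset.mem_range] at hk2
      rw [cfun_zero_of_lt m x j k (by omega)]
      ring
  have hGC : ∀ i j : ℕ, j ≤ n →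
      ∑ k ∈ Finset.range (n + 1), Gfun m x i k * cfun m x j k = eulerianDowling m (i + j) x := by
    intro i j hj
    rw [hdrop i j (n + 1) (by omega), ← hdrop i j (i + j + 1) (by omega), transfer m x i j,
      ← hED (i + j)]
  have hfact : (Matrix.of fun i j : Fin (n + 1) => eulerianDowling m ((i : ℕ) + (j : ℕ)) x)
      = MB * MV * MC := by
    ext i j
    rw [Matrix.mul_apply]
    have hBV : ∀ k : Fin (n + 1), (MB * MV) i k = Gfun m x (i : ℕ) (k : ℕ) := by
      intro k
      rw [Matrix.mul_apply]
      have : ∀ r : Fin (n + 1), MB i r * MV r k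
          = (Ppoly m x (i : ℕ)).coeff (r : ℕ) * ((k : ℕ) : ℝ) ^ (r : ℕ) := fun r => rfl
      rw [Finset.sum_congr rfl (fun r _ => this r)]
      rw [Fin.sum_univ_eq_sum_range
        (fun r => (Ppoly m x (i : ℕ)).coeff r * ((k : ℕ) : ℝ) ^ r) (n + 1)]
      have hdeg : (Ppoly m x (i : ℕ)).natDegree < n + 1 :=
        lt_of_le_of_lt (Ppoly_natDegree_le m x (i : ℕ))
          (Nat.lt_succ_of_le (Nat.lt_succ_iff.mp i.isLt))
      rw [← Polynomial.eval_eq_sum_range' hdeg ((k : ℕ) : ℝ)]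
      exact Ppoly_eval m x (i : ℕ) (k : ℕ)
    have hterm : ∀ k : Fin (n + 1), (MB * MV) i k * MC k j
        = Gfun m x (i : ℕ) (k : ℕ) * cfun m x (j : ℕ) (k : ℕ) := by
      intro k; rw [hBV k]; rfl
    rw [Finset.sum_congr rfl (fun k _ => hterm k)]
    rw [Fin.sum_univ_eq_sum_range
      (fun k => Gfun m x (i : ℕ) k * cfun m x (j : ℕ) k) (n + 1)]
    exact (hGC (i : ℕ) (j : ℕ) (Nat.lt_succ_iff.mp j.isLt)).symm
  rw [hfact, Matrix.det_mul, Matrix.det_mul]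
  have hMB : MB.det = ((m : ℝ) * (x - 1) + 1) ^ ((n + 1).choose 2) := by
    rw [Matrix.det_of_lowerTriangular MB (fun i j hij => ?_)]
    · have hdiag : ∀ i : Fin (n + 1), MB i i = ((m : ℝ) * (x - 1) + 1) ^ (i : ℕ) := by
        intro i; exact Ppoly_coeff m x (i : ℕ)
      rw [Finset.prod_congr rfl (fun i _ => hdiag i)]
      rw [Finset.prod_pow_eq_pow_sum]
      congr 1
      rw [Fin.sum_univ_eq_sum_range (fun i => i) (n + 1), Finset.sum_range_id,
        Nat.choose_two_right]
    · have h2 : (i : ℕ) < (j : ℕ) := hij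
      exact coeff_eq_zero_of_natDegree_lt (lt_of_le_of_lt (Ppoly_natDegree_le m x (i : ℕ)) h2)
  have hMV : MV.det = (Nat.superFactorial n : ℝ) := by
    have hv : MV = (Matrix.vandermonde (fun i : Fin (n + 1) => ((i : ℕ) : ℝ))).transpose := by
      ext r k
      rfl
    rw [hv, Matrix.det_transpose]
    exact Matrix.det_vandermonde_id_eq_superFactorial n
  have hMC : MC.det = ∏ k ∈ Finset.range (n + 1), (k.factorial : ℝ) := by
    rw [Matrix.det_of_upperTriangular (fun i j hij => ?_)]
    · have hdiag : ∀ k : Fin (n + 1), MC k k = ((k : ℕ).factorial : ℝ) := by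
        intro k; exact cfun_diag m x (k : ℕ)
      rw [Finset.prod_congr rfl (fun k _ => hdiag k)]
      exact Fin.prod_univ_eq_prod_range (fun k => (k.factorial : ℝ)) (n + 1)
    · have h2 : (j : ℕ) < (i : ℕ) := hij
      exact cfun_zero_of_lt m x (j : ℕ) (i : ℕ) h2
  rw [hMB, hMV, hMC]
  have hsf : (Nat.superFactorial n : ℝ) = ∏ k ∈ Finset.range (n + 1), (k.factorial : ℝ) := by
    rw [← Nat.cast_prod, Nat.prod_range_succ_factorial]
  rw [hsf, mul_assoc, ← Finset.prod_mul_distrib]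
  congr 1
  exact Finset.prod_congr rfl (fun k _ => (sq (k.factorial : ℝ)).symm)
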